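/- arXiv:2011.08058 — 2 statements merged into one kernel-verified Lean document; each statement's English description precedes it below -/
import Mathlib

section
/- Fisher information dissipation identity (static form of Lemma 3.1): let f : ℝ^d → ℝ be smooth with compact support, set p := π·e^f, b := ∇ log π − γ, and σ := −∇·(p b) + Δp (the right-hand side of the Fokker–Planck equation evaluated at p). Then ∫_{ℝ^d} ( 2⟨∇f(x), ∇(σ/p)(x)⟩ p(x) + ‖∇f(x)‖² σ(x) ) dx = −2 ∫_{ℝ^d} ( Γ₂(f,f)(x) + Γ_I(f,f)(x) ) p(x) dx; the left-hand side is the time derivative of the relative Fisher information ∫‖∇ log(p_t/π)‖² p_t dx along the Fokker–Planck equation ∂_t p = −∇·(p b) + Δp, evaluated at p. -/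
open MeasureTheory
open scoped BigOperators

noncomputable section

/-- `i`-th partial derivative of `f` at `x`, in the coordinate direction `i`. -/
def pderiv' {d : ℕ} (f : EuclideanSpace ℝ (Fin d) → ℝ) (i : Fin d)
    (x : EuclideanSpace ℝ (Fin d)) : ℝ :=
  fderiv ℝ f x (EuclideanSpace.single i 1)

/-- second partial derivative `∂_i ∂_j f` at `x`. -/
def pderiv2 {d : ℕ} (f : EuclideanSpace ℝ (Fin d) → ℝ) (i j : Fin d)
    (x : EuclideanSpace ℝ (Fin d)) : ℝ :=
  pderiv' (fun y => pderiv' f j y) i x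

/-- Laplacian `Δf`. -/
def lap {d : ℕ} (f : EuclideanSpace ℝ (Fin d) → ℝ) (x : EuclideanSpace ℝ (Fin d)) : ℝ :=
  ∑ i, pderiv2 f i i x

/-- carré du champ `Γ₁(g,h) = ⟨∇g, ∇h⟩`. -/
def Gamma1 {d : ℕ} (g h : EuclideanSpace ℝ (Fin d) → ℝ) (x : EuclideanSpace ℝ (Fin d)) : ℝ :=
  ∑ i, pderiv' g i x * pderiv' h i x

/-- generator `L̃ h = ⟨∇ log π, ∇h⟩ + Δh`. -/
def genL {d : ℕ} (π h : EuclideanSpace ℝ (Fin d) → ℝ) (x : EuclideanSpace ℝ (Fin d)) : ℝ :=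
  Gamma1 (fun y => Real.log (π y)) h x + lap h x

/-- Gamma two operator `Γ₂(f,f) = ½ L̃ Γ₁(f,f) − Γ₁(L̃f, f)`. -/
def Gamma2 {d : ℕ} (π f : EuclideanSpace ℝ (Fin d) → ℝ) (x : EuclideanSpace ℝ (Fin d)) : ℝ :=
  (1/2 : ℝ) * genL π (fun y => Gamma1 f f y) x - Gamma1 (fun y => genL π f y) f x

/-- information Gamma operator `Γ_I(f,f) = −½⟨γ, ∇Γ₁(f,f)⟩ + (L̃f)·⟨∇f, γ⟩`. -/
def GammaI {d : ℕ} (π : EuclideanSpace ℝ (Fin d) → ℝ)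
    (γ : EuclideanSpace ℝ (Fin d) → EuclideanSpace ℝ (Fin d))
    (f : EuclideanSpace ℝ (Fin d) → ℝ) (x : EuclideanSpace ℝ (Fin d)) : ℝ :=
  -(1/2 : ℝ) * (∑ i, γ x i * pderiv' (fun y => Gamma1 f f y) i x)
    + genL π f x * (∑ i, pderiv' f i x * γ x i)

/-- the tensor `ℜ` of the paper:
`ℜ_{ij} = −∂²_{ij} log π + ((3−2d)/8) γ_i γ_j − (1/8) δ_{ij} Σ_k γ_k²
          + ½(γ_i ∂_j log π + γ_j ∂_i log π)`. -/
def Rtensor {d : ℕ} (π : EuclideanSpace ℝ (Fin d) → ℝ)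
    (γ : EuclideanSpace ℝ (Fin d) → EuclideanSpace ℝ (Fin d))
    (i j : Fin d) (x : EuclideanSpace ℝ (Fin d)) : ℝ :=
  -pderiv2 (fun y => Real.log (π y)) i j x
    + ((3 - 2 * (d : ℝ)) / 8) * γ x i * γ x j
    - (1/8 : ℝ) * (if i = j then ∑ k, (γ x k) ^ 2 else 0)
    + (1/2 : ℝ) * (γ x i * pderiv' (fun y => Real.log (π y)) j x
        + γ x j * pderiv' (fun y => Real.log (π y)) i x)

/-- the modified Hessian matrix `𝔥ess f`. -/
def hessM {d : ℕ} (γ : EuclideanSpace ℝ (Fin d) → EuclideanSpace ℝ (Fin d))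
    (f : EuclideanSpace ℝ (Fin d) → ℝ) (i j : Fin d) (x : EuclideanSpace ℝ (Fin d)) : ℝ :=
  if i = j then
    pderiv2 f i i x + (1/2 : ℝ) * (∑ k, γ x k * pderiv' f k x)
      - (1/2 : ℝ) * γ x i * pderiv' f i x
  else
    pderiv2 f i j x - (1/4 : ℝ) * (γ x i * pderiv' f j x + γ x j * pderiv' f i x)

/-- right-hand side of the Fokker–Planck equation `−∇·(p b) + Δp` with drift
`b = ∇ log π − γ`, evaluated at a density `p`. -/
def FPrhs {d : ℕ} (π : EuclideanSpace ℝ (Fin d) → ℝ)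
    (γ : EuclideanSpace ℝ (Fin d) → EuclideanSpace ℝ (Fin d))
    (p : EuclideanSpace ℝ (Fin d) → ℝ) (x : EuclideanSpace ℝ (Fin d)) : ℝ :=
  -(∑ i, pderiv' (fun y => p y * (pderiv' (fun z => Real.log (π z)) i y - γ y i)) i x)
    + lap p x

/-- `L̃* p = −∇·(p ∇ log π) + Δp`. -/
def Ltilstar {d : ℕ} (π p : EuclideanSpace ℝ (Fin d) → ℝ)
    (x : EuclideanSpace ℝ (Fin d)) : ℝ :=
  -(∑ i, pderiv' (fun y => p y * pderiv' (fun z => Real.log (π z)) i y) i x) + lap p x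

/-- Arnold–Carlen tensor `(ℜ_AC)_{ij} = −∂²_{ij} log π − ½(∂_i γ_j + ∂_j γ_i)`. -/
def RAC {d : ℕ} (π : EuclideanSpace ℝ (Fin d) → ℝ)
    (γ : EuclideanSpace ℝ (Fin d) → EuclideanSpace ℝ (Fin d))
    (i j : Fin d) (x : EuclideanSpace ℝ (Fin d)) : ℝ :=
  -pderiv2 (fun y => Real.log (π y)) i j x
    - (1/2 : ℝ) * (pderiv' (fun y => γ y j) i x + pderiv' (fun y => γ y i) j x)


section helpers
variable {d : ℕ}
local notation "E" => EuclideanSpace ℝ (Fin d)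

lemma contDiff_pderiv' {F : E → ℝ} (hF : ContDiff ℝ (⊤:ℕ∞) F) (i : Fin d) :
    ContDiff ℝ (⊤:ℕ∞) (pderiv' F i) :=
  (hF.fderiv_right (m := (⊤:ℕ∞)) (by decide)).clm_apply contDiff_const

lemma cd_diffAt {F : E → ℝ} (hF : ContDiff ℝ (⊤:ℕ∞) F) (x : E) : DifferentiableAt ℝ F x :=
  (hF.differentiable (by decide)) x

lemma hcs_pderiv' {F : E → ℝ} (hFc : HasCompactSupport F) (i : Fin d) :
    HasCompactSupport (pderiv' F i) :=
  ((hFc.fderiv (𝕜 := ℝ)).comp_left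
    (g := fun L : E →L[ℝ] ℝ => L (EuclideanSpace.single i 1)) rfl)

lemma pderiv'_add {f g : E → ℝ} {x : E} (hf : DifferentiableAt ℝ f x)
    (hg : DifferentiableAt ℝ g x) (i : Fin d) :
    pderiv' (fun y => f y + g y) i x = pderiv' f i x + pderiv' g i x := by
  simp [pderiv', fderiv_fun_add hf hg]

lemma pderiv'_sub {f g : E → ℝ} {x : E} (hf : DifferentiableAt ℝ f x)
    (hg : DifferentiableAt ℝ g x) (i : Fin d) :
    pderiv' (fun y => f y - g y) i x = pderiv' f i x - pderiv' g i x := by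
  simp [pderiv', fderiv_fun_sub hf hg]

lemma pderiv'_mul {f g : E → ℝ} {x : E} (hf : DifferentiableAt ℝ f x)
    (hg : DifferentiableAt ℝ g x) (i : Fin d) :
    pderiv' (fun y => f y * g y) i x = pderiv' f i x * g x + f x * pderiv' g i x := by
  simp [pderiv', fderiv_fun_mul hf hg]; ring

lemma pderiv'_const_mul {f : E → ℝ} {x : E} (hf : DifferentiableAt ℝ f x) (c : ℝ) (i : Fin d) :
    pderiv' (fun y => c * f y) i x = c * pderiv' f i x := by
  simp [pderiv', fderiv_const_mul hf c]

lemma pderiv'_sum {ι : Type*} {s : Finset ι} {f : ι → E → ℝ} {x : E}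
    (hf : ∀ j ∈ s, DifferentiableAt ℝ (f j) x) (i : Fin d) :
    pderiv' (fun y => ∑ j ∈ s, f j y) i x = ∑ j ∈ s, pderiv' (f j) i x := by
  simp [pderiv', fderiv_fun_sum hf]

lemma pderiv'_exp {f : E → ℝ} {x : E} (hf : DifferentiableAt ℝ f x) (i : Fin d) :
    pderiv' (fun y => Real.exp (f y)) i x = Real.exp (f x) * pderiv' f i x := by
  simp [pderiv', fderiv_exp hf]

lemma pderiv'_log {f : E → ℝ} {x : E} (hf : DifferentiableAt ℝ f x) (hne : f x ≠ 0) (i : Fin d) :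
    pderiv' (fun y => Real.log (f y)) i x = (f x)⁻¹ * pderiv' f i x := by
  have h := ((Real.hasDerivAt_log hne).comp_hasFDerivAt x hf.hasFDerivAt)
  have h2 : fderiv ℝ (fun y => Real.log (f y)) x = (f x)⁻¹ • fderiv ℝ f x := h.fderiv
  simp [pderiv', h2]

lemma hcs_sum {ι : Type*} (s : Finset ι) (h : ι → E → ℝ)
    (hh : ∀ i ∈ s, HasCompactSupport (h i)) :
    HasCompactSupport (fun x => ∑ i ∈ s, h i x) := by
  classical
  induction s using Finset.induction with
  | empty => simpa using HasCompactSupport.intro (isCompact_empty (X := E)) (by simp)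
  | insert _ _ ha ih =>
      simp only [Finset.sum_insert ha]
      exact (hh _ (Finset.mem_insert_self _ _)).add
        (ih (fun i hi => hh i (Finset.mem_insert_of_mem hi)))

lemma hcs_sub {f g : E → ℝ} (hf : HasCompactSupport f) (hg : HasCompactSupport g) :
    HasCompactSupport (fun y => f y - g y) := by
  have hg' : HasCompactSupport (fun y => -g y) := by
    simpa [HasCompactSupport, tsupport, Function.support_neg] using hg
  have h : HasCompactSupport (fun y => f y + -g y) := hf.add hg'
  convert h using 1; funext y; ring

lemma integral_pderiv'_eq_zero {F : E → ℝ} (hF : ContDiff ℝ (⊤:ℕ∞) F)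
    (hFc : HasCompactSupport F) (i : Fin d) :
    ∫ x, pderiv' F i x = 0 := by
  have hd : Differentiable ℝ F := hF.differentiable (by decide)
  have hint : Integrable (fun x => fderiv ℝ F x (EuclideanSpace.single i 1)) :=
    ((contDiff_pderiv' hF i).continuous).integrable_of_hasCompactSupport (hcs_pderiv' hFc i)
  have h := integral_mul_fderiv_eq_neg_fderiv_mul_of_integrable (μ := volume)
    (f := fun _ : E => (1:ℝ)) (g := F) (v := EuclideanSpace.single i 1)
    (by simpa using hint)
    (by simpa using hint)
    (by simpa using hF.continuous.integrable_of_hasCompactSupport hFc)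
    (fun x _ => differentiableAt_const _) (fun x _ => hd x)
  simpa [pderiv'] using h

end helpers

/-- Lemma 3.1 (static form): with `p = π e^f`, `b = ∇ log π − γ`, and
`σ = −∇·(p b) + Δp`, the time derivative of the relative Fisher information along
the Fokker–Planck equation, namely `∫ (2⟨∇f, ∇(σ/p)⟩ p + ‖∇f‖² σ)`, equals
`−2 ∫ (Γ₂(f,f) + Γ_I(f,f)) p`. -/
theorem fisher_information_dissipation_identity
    (d : ℕ) (hd : 1 ≤ d)
    (π : EuclideanSpace ℝ (Fin d) → ℝ) (hπ : ContDiff ℝ (⊤ : ℕ∞) π)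
    (hπpos : ∀ x, 0 < π x)
    (γ : EuclideanSpace ℝ (Fin d) → EuclideanSpace ℝ (Fin d))
    (hγ : ContDiff ℝ (⊤ : ℕ∞) γ)
    (hstat : ∀ x, ∑ i, pderiv' (fun y => π y * γ y i) i x = 0)
    (f : EuclideanSpace ℝ (Fin d) → ℝ) (hf : ContDiff ℝ (⊤ : ℕ∞) f)
    (hfc : HasCompactSupport f) :
    ∫ x, (2 * Gamma1 f
            (fun y => FPrhs π γ (fun z => π z * Real.exp (f z)) y
              / (π y * Real.exp (f y))) x * (π x * Real.exp (f x))
          + Gamma1 f f x * FPrhs π γ (fun z => π z * Real.exp (f z)) x) =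
      -2 * ∫ x, (Gamma2 π f x + GammaI π γ f x) * (π x * Real.exp (f x)) := by
  classical
  have hπne : ∀ y, π y ≠ 0 := fun y => ne_of_gt (hπpos y)
  set ℓ : EuclideanSpace ℝ (Fin d) → ℝ := fun z => Real.log (π z) with hℓdef
  set p : EuclideanSpace ℝ (Fin d) → ℝ := fun z => π z * Real.exp (f z) with hpdef
  have hppos : ∀ y, 0 < p y := fun y => mul_pos (hπpos y) (Real.exp_pos _)
  set GG : EuclideanSpace ℝ (Fin d) → ℝ := fun y => Gamma1 f f y with hGGdef
  set cc : EuclideanSpace ℝ (Fin d) → ℝ := fun y => ∑ j, pderiv' f j y * γ y j with hccdef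
  set LL : EuclideanSpace ℝ (Fin d) → ℝ := fun y => genL π f y with hLLdef
  set u : EuclideanSpace ℝ (Fin d) → ℝ := fun y => LL y + (GG y + cc y) with hudef
  -- smoothness
  have hγi : ∀ i : Fin d, ContDiff ℝ (⊤:ℕ∞) (fun y => γ y i) :=
    fun i => (EuclideanSpace.proj (𝕜 := ℝ) i).contDiff.comp hγ
  have hℓc : ContDiff ℝ (⊤:ℕ∞) ℓ := hπ.log hπne
  have hpc : ContDiff ℝ (⊤:ℕ∞) p := hπ.mul hf.exp
  have hGGc : ContDiff ℝ (⊤:ℕ∞) GG := by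
    rw [hGGdef]
    exact ContDiff.sum fun j _ => (contDiff_pderiv' hf j).mul (contDiff_pderiv' hf j)
  have hccc : ContDiff ℝ (⊤:ℕ∞) cc := by
    rw [hccdef]
    exact ContDiff.sum fun j _ => (contDiff_pderiv' hf j).mul (hγi j)
  have hLLc : ContDiff ℝ (⊤:ℕ∞) LL := by
    rw [hLLdef]
    refine ContDiff.add ?_ ?_
    · exact ContDiff.sum fun j _ => (contDiff_pderiv' hℓc j).mul (contDiff_pderiv' hf j)
    · exact ContDiff.sum fun j _ => contDiff_pderiv' (contDiff_pderiv' hf j) j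
  have huc : ContDiff ℝ (⊤:ℕ∞) u := by
    rw [hudef]; exact hLLc.add (hGGc.add hccc)
  have hfd : ∀ x, DifferentiableAt ℝ f x := cd_diffAt hf
  have hexp : ∀ (i : Fin d) y, pderiv' (fun z => Real.exp (f z)) i y
      = Real.exp (f y) * pderiv' f i y := fun i y => pderiv'_exp (hfd y) i
  have hπl : ∀ (i : Fin d) y, pderiv' π i y = π y * pderiv' ℓ i y := by
    intro i y
    have h := pderiv'_log (f := π) (cd_diffAt hπ y) (hπne y) i
    have h2 : pderiv' ℓ i y = (π y)⁻¹ * pderiv' π i y := by rw [hℓdef]; exact h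
    rw [h2, ← mul_assoc, mul_inv_cancel₀ (hπne y), one_mul]
  have hp' : ∀ i : Fin d, pderiv' p i = fun y => p y * (pderiv' ℓ i y + pderiv' f i y) := by
    intro i; funext y
    have h1 : pderiv' p i y = pderiv' π i y * Real.exp (f y)
        + π y * (Real.exp (f y) * pderiv' f i y) := by
      rw [hpdef]
      rw [pderiv'_mul (cd_diffAt hπ y) (cd_diffAt hf.exp y) i, hexp i y]
    rw [h1, hπl i y, hpdef]; ring
  have hstat' : ∀ x, ∑ i, (pderiv' ℓ i x * γ x i + pderiv' (fun y => γ y i) i x) = 0 := by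
    intro x
    have h := hstat x
    have h2 : ∀ i : Fin d, pderiv' (fun y => π y * γ y i) i x
        = π x * (pderiv' ℓ i x * γ x i + pderiv' (fun y => γ y i) i x) := by
      intro i
      rw [pderiv'_mul (cd_diffAt hπ x) (cd_diffAt (hγi i) x) i, hπl i x]; ring
    rw [Finset.sum_congr rfl (fun i _ => h2 i), ← Finset.mul_sum] at h
    exact (mul_eq_zero.mp h).resolve_left (hπne x)
  -- pointwise identity for the Fokker-Planck right-hand side
  have hFP : ∀ x, FPrhs π γ p x = p x * u x := by
    intro x
    have hlapp : ∀ i : Fin d, pderiv2 p i i x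
        = p x * (pderiv' ℓ i x + pderiv' f i x) * (pderiv' ℓ i x + pderiv' f i x)
          + p x * (pderiv2 ℓ i i x + pderiv2 f i i x) := by
      intro i
      have h0 : pderiv2 p i i x
          = pderiv' (fun y => p y * (pderiv' ℓ i y + pderiv' f i y)) i x := by
        simp only [pderiv2, hp' i]
      rw [h0, pderiv'_mul (cd_diffAt hpc x)
        (cd_diffAt ((contDiff_pderiv' hℓc i).add (contDiff_pderiv' hf i)) x) i,
        pderiv'_add (cd_diffAt (contDiff_pderiv' hℓc i) x)
          (cd_diffAt (contDiff_pderiv' hf i) x) i]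
      have hpx := congrFun (hp' i) x
      simp only [pderiv2, hpx]
      try ring
    have hBi : ∀ i : Fin d,
        pderiv' (fun y => p y * (pderiv' ℓ i y - γ y i)) i x
        = p x * (pderiv' ℓ i x + pderiv' f i x) * (pderiv' ℓ i x - γ x i)
          + p x * (pderiv2 ℓ i i x - pderiv' (fun y => γ y i) i x) := by
      intro i
      rw [pderiv'_mul (cd_diffAt hpc x)
        (cd_diffAt ((contDiff_pderiv' hℓc i).sub (hγi i)) x) i,
        pderiv'_sub (cd_diffAt (contDiff_pderiv' hℓc i) x) (cd_diffAt (hγi i) x) i]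
      have hpx := congrFun (hp' i) x
      simp only [pderiv2, hpx]
      try ring
    have hunfold : FPrhs π γ p x
        = -(∑ i, pderiv' (fun y => p y * (pderiv' ℓ i y - γ y i)) i x)
          + ∑ i, pderiv2 p i i x := by
      simp only [FPrhs, lap, ← hℓdef]
    rw [hunfold, Finset.sum_congr rfl (fun i _ => hBi i),
      Finset.sum_congr rfl (fun i _ => hlapp i)]
    have hux : u x = (∑ i, pderiv' ℓ i x * pderiv' f i x) + (∑ i, pderiv2 f i i x)
        + ((∑ i, pderiv' f i x * pderiv' f i x) + (∑ i, pderiv' f i x * γ x i)) := by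
      rw [hudef, hLLdef, hGGdef, hccdef]
      simp only [genL, Gamma1, lap, ← hℓdef]
      try ring
    rw [hux]
    have e1 : ∀ i : Fin d,
        p x * (pderiv' ℓ i x + pderiv' f i x) * (pderiv' ℓ i x - γ x i)
          + p x * (pderiv2 ℓ i i x - pderiv' (fun y => γ y i) i x)
        = p x * (pderiv' ℓ i x * pderiv' ℓ i x) + p x * (pderiv' ℓ i x * pderiv' f i x)
          - p x * (pderiv' ℓ i x * γ x i) - p x * (pderiv' f i x * γ x i)
          + p x * pderiv2 ℓ i i x - p x * pderiv' (fun y => γ y i) i x := by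
      intro i; ring
    have e2 : ∀ i : Fin d,
        p x * (pderiv' ℓ i x + pderiv' f i x) * (pderiv' ℓ i x + pderiv' f i x)
          + p x * (pderiv2 ℓ i i x + pderiv2 f i i x)
        = p x * (pderiv' ℓ i x * pderiv' ℓ i x) + 2 * (p x * (pderiv' ℓ i x * pderiv' f i x))
          + p x * (pderiv' f i x * pderiv' f i x)
          + p x * pderiv2 ℓ i i x + p x * pderiv2 f i i x := by
      intro i; ring
    rw [Finset.sum_congr rfl (fun i _ => e1 i), Finset.sum_congr rfl (fun i _ => e2 i)]
    simp only [Finset.sum_add_distrib, Finset.sum_sub_distrib, ← Finset.mul_sum]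
    have hst : (∑ i, pderiv' ℓ i x * γ x i) + (∑ i, pderiv' (fun y => γ y i) i x) = 0 := by
      rw [← Finset.sum_add_distrib]; exact hstat' x
    linear_combination (p x) * hst
  have hu' : ∀ (i : Fin d) x, pderiv' u i x
      = pderiv' LL i x + (pderiv' GG i x + pderiv' cc i x) := by
    intro i x
    rw [hudef]
    rw [pderiv'_add (cd_diffAt hLLc x) (cd_diffAt (hGGc.add hccc) x) i,
      pderiv'_add (cd_diffAt hGGc x) (cd_diffAt hccc x) i]
  set Fv : Fin d → EuclideanSpace ℝ (Fin d) → ℝ := fun i y =>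
    p y * (pderiv' GG i y + (GG y * pderiv' f i y - GG y * γ y i
      + 2 * (cc y * pderiv' f i y))) with hFvdef
  have hdiv : ∀ x, 2 * Gamma1 f u x * p x + Gamma1 f f x * (p x * u x)
      = -2 * ((Gamma2 π f x + GammaI π γ f x) * p x) + ∑ i, pderiv' (Fv i) i x := by
    intro x
    have hGGx : GG x = ∑ i, pderiv' f i x * pderiv' f i x := by
      rw [hGGdef]; simp only [Gamma1]
    have hccx : cc x = ∑ i, pderiv' f i x * γ x i := by rw [hccdef]
    have hLLx : LL x = (∑ i, pderiv' ℓ i x * pderiv' f i x) + ∑ i, pderiv2 f i i x := by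
      rw [hLLdef]; simp only [genL, Gamma1, lap, ← hℓdef]
    -- derivative of Fv i at x
    have hFv' : ∀ i : Fin d, pderiv' (Fv i) i x
        = (p x * (pderiv' ℓ i x + pderiv' f i x))
            * (pderiv' GG i x + (GG x * pderiv' f i x - GG x * γ x i
                + 2 * (cc x * pderiv' f i x)))
          + p x * (pderiv2 GG i i x
              + ((pderiv' GG i x * pderiv' f i x + GG x * pderiv2 f i i x)
                 - (pderiv' GG i x * γ x i + GG x * pderiv' (fun y => γ y i) i x)
                 + 2 * (pderiv' cc i x * pderiv' f i x + cc x * pderiv2 f i i x))) := by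
      intro i
      have d1 : DifferentiableAt ℝ (fun y => GG y * pderiv' f i y) x :=
        (cd_diffAt hGGc x).mul (cd_diffAt (contDiff_pderiv' hf i) x)
      have d2 : DifferentiableAt ℝ (fun y => GG y * γ y i) x :=
        (cd_diffAt hGGc x).mul (cd_diffAt (hγi i) x)
      have d3 : DifferentiableAt ℝ (fun y => cc y * pderiv' f i y) x :=
        (cd_diffAt hccc x).mul (cd_diffAt (contDiff_pderiv' hf i) x)
      have d4 : DifferentiableAt ℝ (fun y => 2 * (cc y * pderiv' f i y)) x :=
        d3.const_mul 2
      have d5 : DifferentiableAt ℝ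
          (fun y => GG y * pderiv' f i y - GG y * γ y i) x := d1.sub d2
      have d6 : DifferentiableAt ℝ
          (fun y => GG y * pderiv' f i y - GG y * γ y i
            + 2 * (cc y * pderiv' f i y)) x := d5.add d4
      have d7 : DifferentiableAt ℝ (pderiv' GG i) x := cd_diffAt (contDiff_pderiv' hGGc i) x
      have d8 : DifferentiableAt ℝ
          (fun y => pderiv' GG i y + (GG y * pderiv' f i y - GG y * γ y i
            + 2 * (cc y * pderiv' f i y))) x := d7.add d6
      rw [hFvdef]
      rw [pderiv'_mul (cd_diffAt hpc x) d8 i,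
        pderiv'_add d7 d6 i,
        pderiv'_add d5 d4 i,
        pderiv'_sub d1 d2 i,
        pderiv'_mul (cd_diffAt hGGc x) (cd_diffAt (contDiff_pderiv' hf i) x) i,
        pderiv'_mul (cd_diffAt hGGc x) (cd_diffAt (hγi i) x) i,
        pderiv'_const_mul d3 2 i,
        pderiv'_mul (cd_diffAt hccc x) (cd_diffAt (contDiff_pderiv' hf i) x) i,
        congrFun (hp' i) x]
      simp only [pderiv2]
      try ring
    -- canonical per-i form
    have hFvE : ∀ i : Fin d, pderiv' (Fv i) i x
        = p x * (pderiv' ℓ i x * pderiv' GG i x)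
          + (p x * GG x) * (pderiv' ℓ i x * pderiv' f i x)
          - (p x * GG x) * (pderiv' ℓ i x * γ x i)
          + (2 * (p x * cc x)) * (pderiv' ℓ i x * pderiv' f i x)
          + p x * (pderiv' f i x * pderiv' GG i x)
          + (p x * GG x) * (pderiv' f i x * pderiv' f i x)
          - (p x * GG x) * (pderiv' f i x * γ x i)
          + (2 * (p x * cc x)) * (pderiv' f i x * pderiv' f i x)
          + p x * pderiv2 GG i i x
          + p x * (pderiv' f i x * pderiv' GG i x)
          + (p x * GG x) * pderiv2 f i i x
          - p x * (γ x i * pderiv' GG i x)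
          - (p x * GG x) * pderiv' (fun y => γ y i) i x
          + (2 * p x) * (pderiv' f i x * pderiv' cc i x)
          + (2 * (p x * cc x)) * pderiv2 f i i x := by
      intro i; rw [hFv' i]; ring
    have hG1u : Gamma1 f u x
        = ∑ i, (pderiv' LL i x * pderiv' f i x
            + (pderiv' f i x * pderiv' GG i x + pderiv' f i x * pderiv' cc i x)) := by
      simp only [Gamma1]
      exact Finset.sum_congr rfl (fun i _ => by rw [hu' i x]; ring)
    have hux2 : u x = ((∑ i, pderiv' ℓ i x * pderiv' f i x) + ∑ i, pderiv2 f i i x)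
        + ((∑ i, pderiv' f i x * pderiv' f i x) + (∑ i, pderiv' f i x * γ x i)) := by
      rw [hudef]; simp only [hLLx, hGGx, hccx]
    have hst : (∑ i, pderiv' ℓ i x * γ x i) + (∑ i, pderiv' (fun y => γ y i) i x) = 0 := by
      rw [← Finset.sum_add_distrib]; exact hstat' x
    rw [Finset.sum_congr rfl (fun i _ => hFvE i), hG1u, hux2]
    simp only [Gamma2, GammaI]
    simp only [← hGGdef, ← hLLdef]
    simp only [genL, Gamma1, lap, ← hℓdef]
    simp only [Finset.sum_add_distrib, Finset.sum_sub_distrib, ← Finset.mul_sum]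
    rw [hGGx, hccx, hLLx]
    linear_combination (p x * (∑ i, pderiv' f i x * pderiv' f i x)) * hst
  -- compact supports
  have hfi_cs : ∀ i : Fin d, HasCompactSupport (pderiv' f i) := fun i => hcs_pderiv' hfc i
  have hGG_cs : HasCompactSupport GG := by
    rw [hGGdef]
    exact hcs_sum Finset.univ (fun j y => pderiv' f j y * pderiv' f j y)
      (fun j _ => (hfi_cs j).mul_right)
  have hcc_cs : HasCompactSupport cc := by
    rw [hccdef]
    exact hcs_sum Finset.univ (fun j y => pderiv' f j y * γ y j)
      (fun j _ => (hfi_cs j).mul_right)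
  have hLL_cs : HasCompactSupport LL := by
    rw [hLLdef]
    have h1 : HasCompactSupport (fun y => Gamma1 (fun z => Real.log (π z)) f y) :=
      hcs_sum Finset.univ
        (fun j y => pderiv' (fun z => Real.log (π z)) j y * pderiv' f j y)
        (fun j _ => (hfi_cs j).mul_left)
    have h2 : HasCompactSupport (fun y => lap f y) :=
      hcs_sum Finset.univ (fun j y => pderiv2 f j j y)
        (fun j _ => hcs_pderiv' (hfi_cs j) j)
    exact h1.add h2
  have hFv_c : ∀ i : Fin d, ContDiff ℝ (⊤:ℕ∞) (Fv i) := by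
    intro i
    rw [hFvdef]
    exact hpc.mul ((contDiff_pderiv' hGGc i).add
      (((hGGc.mul (contDiff_pderiv' hf i)).sub (hGGc.mul (hγi i))).add
        (contDiff_const.mul (hccc.mul (contDiff_pderiv' hf i)))))
  have hFv_cs : ∀ i : Fin d, HasCompactSupport (Fv i) := by
    intro i
    rw [hFvdef]
    have hbr : HasCompactSupport (fun y => pderiv' GG i y
        + (GG y * pderiv' f i y - GG y * γ y i + 2 * (cc y * pderiv' f i y))) := by
      have b1 : HasCompactSupport (fun y => GG y * pderiv' f i y) := hGG_cs.mul_right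
      have b2 : HasCompactSupport (fun y => GG y * γ y i) := hGG_cs.mul_right
      have b3 : HasCompactSupport (fun y => 2 * (cc y * pderiv' f i y)) :=
        (hcc_cs.mul_right (f' := pderiv' f i)).mul_left
      exact (hcs_pderiv' hGG_cs i).add ((hcs_sub b1 b2).add b3)
    exact hbr.mul_left
  -- integrability
  have hIntFv : ∀ i : Fin d, Integrable (fun x => pderiv' (Fv i) i x) := fun i =>
    ((contDiff_pderiv' (hFv_c i) i).continuous).integrable_of_hasCompactSupport
      (hcs_pderiv' (hFv_cs i) i)
  have hI2 : Integrable (fun x => ∑ i, pderiv' (Fv i) i x) :=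
    integrable_finset_sum _ (fun i _ => hIntFv i)
  have hmG2_c : ContDiff ℝ (⊤:ℕ∞) (fun x => Gamma2 π f x) := by
    have g1 : ContDiff ℝ (⊤:ℕ∞) (fun x => genL π (fun y => Gamma1 f f y) x) := by
      refine ContDiff.add ?_ ?_
      · exact ContDiff.sum fun j _ =>
          (contDiff_pderiv' hℓc j).mul (contDiff_pderiv' hGGc j)
      · exact ContDiff.sum fun j _ =>
          contDiff_pderiv' (contDiff_pderiv' hGGc j) j
    have g2 : ContDiff ℝ (⊤:ℕ∞) (fun x => Gamma1 (fun y => genL π f y) f x) :=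
      ContDiff.sum fun j _ => (contDiff_pderiv' hLLc j).mul (contDiff_pderiv' hf j)
    exact (contDiff_const.mul g1).sub g2
  have hmGI_c : ContDiff ℝ (⊤:ℕ∞) (fun x => GammaI π γ f x) := by
    refine ContDiff.add ?_ ?_
    · exact contDiff_const.mul (ContDiff.sum fun j _ =>
        (hγi j).mul (contDiff_pderiv' hGGc j))
    · exact hLLc.mul (ContDiff.sum fun j _ => (contDiff_pderiv' hf j).mul (hγi j))
  have hG2_cs : HasCompactSupport (fun x => Gamma2 π f x) := by
    have g1 : HasCompactSupport (fun x => genL π (fun y => Gamma1 f f y) x) := by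
      have a1 : HasCompactSupport
          (fun x => Gamma1 (fun z => Real.log (π z)) (fun y => Gamma1 f f y) x) :=
        hcs_sum Finset.univ
          (fun j y => pderiv' (fun z => Real.log (π z)) j y
            * pderiv' (fun y' => Gamma1 f f y') j y)
          (fun j _ => HasCompactSupport.mul_left (hcs_pderiv' hGG_cs j))
      have a2 : HasCompactSupport (fun x => lap (fun y => Gamma1 f f y) x) :=
        hcs_sum Finset.univ (fun j y => pderiv2 (fun y' => Gamma1 f f y') j j y)
          (fun j _ => hcs_pderiv' (hcs_pderiv' hGG_cs j) j)
      exact a1.add a2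
    have g2 : HasCompactSupport (fun x => Gamma1 (fun y => genL π f y) f x) :=
      hcs_sum Finset.univ
        (fun j y => pderiv' (fun y' => genL π f y') j y * pderiv' f j y)
        (fun j _ => (hfi_cs j).mul_left)
    exact hcs_sub (g1.mul_left (f := fun _ => (1/2 : ℝ))) g2
  have hGI_cs : HasCompactSupport (fun x => GammaI π γ f x) := by
    have a1 : HasCompactSupport
        (fun x => ∑ i, γ x i * pderiv' (fun y => Gamma1 f f y) i x) :=
      hcs_sum Finset.univ
        (fun j y => γ y j * pderiv' (fun y' => Gamma1 f f y') j y)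
        (fun j _ => HasCompactSupport.mul_left (hcs_pderiv' hGG_cs j))
    have a2 : HasCompactSupport (fun x => ∑ i, pderiv' f i x * γ x i) :=
      hcs_sum Finset.univ (fun j y => pderiv' f j y * γ y j)
        (fun j _ => (hfi_cs j).mul_right)
    exact (a1.mul_left (f := fun _ => -(1/2 : ℝ))).add (a2.mul_left (f := fun x => genL π f x))
  have hm_int : Integrable (fun x => (Gamma2 π f x + GammaI π γ f x) * p x) := by
    have hc : Continuous (fun x => (Gamma2 π f x + GammaI π γ f x) * p x) :=
      ((hmG2_c.continuous).add (hmGI_c.continuous)).mul hpc.continuous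
    have hcs : HasCompactSupport (fun x => (Gamma2 π f x + GammaI π γ f x) * p x) :=
      (hG2_cs.add hGI_cs).mul_right
    exact hc.integrable_of_hasCompactSupport hcs
  have hI1 : Integrable (fun x => -2 * ((Gamma2 π f x + GammaI π γ f x) * p x)) :=
    hm_int.const_mul (-2)
  -- rewrite the goal
  have hpx : ∀ y, π y * Real.exp (f y) = p y := fun y => by rw [hpdef]
  have hquot : (fun y => FPrhs π γ p y / (π y * Real.exp (f y))) = u := by
    funext y
    rw [hpx y, hFP y, mul_div_cancel_left₀ _ (ne_of_gt (hppos y))]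
  rw [hquot]
  simp only [hpx]
  have hpoint : ∀ x, 2 * Gamma1 f u x * p x + Gamma1 f f x * FPrhs π γ p x
      = -2 * ((Gamma2 π f x + GammaI π γ f x) * p x) + ∑ i, pderiv' (Fv i) i x := by
    intro x; rw [hFP x]; exact hdiv x
  rw [MeasureTheory.integral_congr_ae (Filter.Eventually.of_forall hpoint)]
  rw [MeasureTheory.integral_add hI1 hI2]
  rw [MeasureTheory.integral_finset_sum _ (fun i _ => hIntFv i)]
  have hz : ∀ i : Fin d, (∫ x, pderiv' (Fv i) i x) = 0 := fun i =>
    integral_pderiv'_eq_zero (hFv_c i) (hFv_cs i) i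
  rw [Finset.sum_congr rfl (fun i _ => hz i)]
  simp only [Finset.sum_const, smul_zero, add_zero]
  rw [MeasureTheory.integral_const_mul]


end
end

section
/- Integrated Gamma identity at the invariant measure (Lemma 4.1): for every smooth compactly supported Φ : ℝ^d → ℝ, ∫_{ℝ^d} ( Γ₂(Φ,Φ)(x) + Γ_I(Φ,Φ)(x) ) π(x) dx = ∫_{ℝ^d} L̃Φ(x) · ( L̃Φ(x) + ⟨∇Φ(x), γ(x)⟩ ) π(x) dx. -/
open MeasureTheory
open scoped BigOperators

noncomputable section

section Aux
variable {d : ℕ}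


lemma support_pderiv'_subset (f : EuclideanSpace ℝ (Fin d) → ℝ) (i : Fin d) :
    Function.support (pderiv' f i) ⊆ tsupport f := by
  intro x hx
  apply support_fderiv_subset ℝ
  simp only [Function.mem_support, pderiv'] at hx ⊢
  intro h
  exact hx (by rw [h]; rfl)

lemma hcs_of_support_subset {f : EuclideanSpace ℝ (Fin d) → ℝ}
    {K : Set (EuclideanSpace ℝ (Fin d))} (hK : IsCompact K) (hKc : IsClosed K)
    (h : Function.support f ⊆ K) : HasCompactSupport f :=
  HasCompactSupport.of_support_subset_isCompact hK h

lemma contDiff_pderiv'_s11 {f : EuclideanSpace ℝ (Fin d) → ℝ} (hf : ContDiff ℝ (⊤ : ℕ∞) f)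
    (i : Fin d) : ContDiff ℝ (⊤ : ℕ∞) (pderiv' f i) :=
  (hf.fderiv_right (le_refl _)).clm_apply contDiff_const

-- integration by parts
lemma ibp {u w : EuclideanSpace ℝ (Fin d) → ℝ} (hu : ContDiff ℝ (⊤ : ℕ∞) u)
    (huc : HasCompactSupport u) (hw : ContDiff ℝ (⊤ : ℕ∞) w) (i : Fin d) :
    ∫ x, pderiv' u i x * w x = -∫ x, u x * pderiv' w i x := by
  -- choose a radius with tsupport u ⊆ ball 0 r
  obtain ⟨r, hr0, hr⟩ : ∃ r : ℝ, 0 < r ∧ tsupport u ⊆ Metric.ball 0 r := by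
    obtain ⟨r, hr⟩ := huc.isBounded.subset_ball 0
    exact ⟨max r 1, lt_of_lt_of_le one_pos (le_max_right _ _),
      hr.trans (Metric.ball_subset_ball (le_max_left _ _))⟩
  -- bump function equal to 1 on closedBall 0 r
  let χb : ContDiffBump (0 : EuclideanSpace ℝ (Fin d)) :=
    ⟨r, r + 1, hr0, by linarith⟩
  set χ : EuclideanSpace ℝ (Fin d) → ℝ := fun x => χb x with hχdef
  have hχ1 : ∀ x ∈ Metric.closedBall (0 : EuclideanSpace ℝ (Fin d)) r, χ x = 1 :=
    fun x hx => χb.one_of_mem_closedBall hx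
  have hχsm : ContDiff ℝ (⊤ : ℕ∞) χ := χb.contDiff
  have hχc : HasCompactSupport χ := χb.hasCompactSupport
  set f : EuclideanSpace ℝ (Fin d) → ℝ := fun x => w x * χ x with hfdef
  have hfc : HasCompactSupport f := hχc.mul_left
  have hfsm : ContDiff ℝ (⊤ : ℕ∞) f := hw.mul hχsm
  obtain ⟨C, hC⟩ := ContDiff.lipschitzWith_of_hasCompactSupport hfc hfsm (by simp)
  obtain ⟨D, hD⟩ := ContDiff.lipschitzWith_of_hasCompactSupport huc hu (by simp)
  have key := LipschitzWith.integral_lineDeriv_mul_eq (μ := volume) hC hD huc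
    (EuclideanSpace.single i 1)
  -- rewrite line derivatives as fderivs
  have hfd : Differentiable ℝ f := hfsm.differentiable (by simp)
  have hud : Differentiable ℝ u := hu.differentiable (by simp)
  simp_rw [(hfd _).lineDeriv_eq_fderiv, (hud _).lineDeriv_eq_fderiv, map_neg, neg_mul] at key
  rw [integral_neg] at key
  -- pointwise identification of both sides
  have h1 : ∀ x, fderiv ℝ f x (EuclideanSpace.single i 1) * u x = u x * pderiv' w i x := by
    intro x
    by_cases hx : x ∈ tsupport u
    · have hball : Metric.closedBall (0 : EuclideanSpace ℝ (Fin d)) r ∈ nhds x :=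
        Filter.mem_of_superset (Metric.isOpen_ball.mem_nhds (hr hx)) Metric.ball_subset_closedBall
      have heq : f =ᶠ[nhds x] w := by
        filter_upwards [hball] with y hy
        simp [hfdef, hχ1 y hy]
      rw [heq.fderiv_eq]
      rw [mul_comm]
      rfl
    · have hu0 : u x = 0 := image_eq_zero_of_notMem_tsupport hx
      simp [hu0]
  have h2 : ∀ x, fderiv ℝ u x (EuclideanSpace.single i 1) * f x
      = pderiv' u i x * w x := by
    intro x
    by_cases hx : x ∈ tsupport u
    · have : χ x = 1 := hχ1 x (Metric.ball_subset_closedBall (hr hx))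
      simp [hfdef, this, pderiv']
    · have : pderiv' u i x = 0 := by
        by_contra h
        exact hx (support_pderiv'_subset u i h)
      have h0 : (fderiv ℝ u x) (EuclideanSpace.single i 1) = 0 := this
      rw [pderiv', h0]; ring
  simp_rw [h1, h2] at key
  rw [key, neg_neg]

lemma intD {F : EuclideanSpace ℝ (Fin d) → ℝ} (hF : ContDiff ℝ (⊤ : ℕ∞) F)
    (hFc : HasCompactSupport F) (i : Fin d) : ∫ x, pderiv' F i x = 0 := by
  have h := ibp hF hFc contDiff_const (w := fun _ => (1:ℝ)) i
  have hz : ∀ x : EuclideanSpace ℝ (Fin d), pderiv' (fun _ => (1:ℝ)) i x = 0 := by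
    intro x; rw [pderiv', fderiv_fun_const]; simp
  simp only [mul_one, hz, mul_zero, integral_zero, neg_zero] at h
  exact h

lemma pd_mul {f g : EuclideanSpace ℝ (Fin d) → ℝ} {x : EuclideanSpace ℝ (Fin d)}
    (hf : DifferentiableAt ℝ f x) (hg : DifferentiableAt ℝ g x) (i : Fin d) :
    pderiv' (fun y => f y * g y) i x = pderiv' f i x * g x + f x * pderiv' g i x := by
  simp only [pderiv', fderiv_fun_mul hf hg, ContinuousLinearMap.add_apply,
    ContinuousLinearMap.smul_apply, smul_eq_mul]
  ring

lemma pd_sum {ι : Type*} (s : Finset ι) {f : ι → EuclideanSpace ℝ (Fin d) → ℝ}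
    {x : EuclideanSpace ℝ (Fin d)} (hf : ∀ j ∈ s, DifferentiableAt ℝ (f j) x) (i : Fin d) :
    pderiv' (fun y => ∑ j ∈ s, f j y) i x = ∑ j ∈ s, pderiv' (f j) i x := by
  simp only [pderiv', fderiv_fun_sum hf]
  simp

lemma pd_const_mul {f : EuclideanSpace ℝ (Fin d) → ℝ} {x : EuclideanSpace ℝ (Fin d)}
    (hf : DifferentiableAt ℝ f x) (c : ℝ) (i : Fin d) :
    pderiv' (fun y => c * f y) i x = c * pderiv' f i x := by
  simp only [pderiv', fderiv_const_mul hf c]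
  simp

lemma pd_sub {f g : EuclideanSpace ℝ (Fin d) → ℝ} {x : EuclideanSpace ℝ (Fin d)}
    (hf : DifferentiableAt ℝ f x) (hg : DifferentiableAt ℝ g x) (i : Fin d) :
    pderiv' (fun y => f y - g y) i x = pderiv' f i x - pderiv' g i x := by
  simp only [pderiv', fderiv_fun_sub hf hg]
  simp

lemma pd_log {π : EuclideanSpace ℝ (Fin d) → ℝ} (hπ : Differentiable ℝ π)
    (hπpos : ∀ x, 0 < π x) (x : EuclideanSpace ℝ (Fin d)) (i : Fin d) :
    pderiv' (fun y => Real.log (π y)) i x = pderiv' π i x / π x := by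
  have h := (Real.hasDerivAt_log (hπpos x).ne').comp_hasFDerivAt x (hπ x).hasFDerivAt
  rw [pderiv', show (fun y => Real.log (π y)) = Real.log ∘ π from rfl, h.fderiv]
  simp [pderiv', div_eq_inv_mul]


lemma tsupport_pderiv'_subset (f : EuclideanSpace ℝ (Fin d) → ℝ) (i : Fin d) :
    tsupport (pderiv' f i) ⊆ tsupport f :=
  closure_minimal (support_pderiv'_subset f i) (isClosed_tsupport f)

lemma pderiv'_eq_zero_of_nmem {f : EuclideanSpace ℝ (Fin d) → ℝ} {i : Fin d}
    {x : EuclideanSpace ℝ (Fin d)} (hx : x ∉ tsupport f) : pderiv' f i x = 0 := by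
  by_contra h
  exact hx (support_pderiv'_subset f i h)

end Aux

/-- Lemma 4.1: integrated Gamma identity at the invariant measure:
`∫ (Γ₂(Φ,Φ) + Γ_I(Φ,Φ)) π = ∫ L̃Φ (L̃Φ + ⟨∇Φ, γ⟩) π`. -/
theorem integrated_gamma_identity
    (d : ℕ) (hd : 1 ≤ d)
    (π : EuclideanSpace ℝ (Fin d) → ℝ) (hπ : ContDiff ℝ (⊤ : ℕ∞) π)
    (hπpos : ∀ x, 0 < π x)
    (γ : EuclideanSpace ℝ (Fin d) → EuclideanSpace ℝ (Fin d))
    (hγ : ContDiff ℝ (⊤ : ℕ∞) γ)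
    (hstat : ∀ x, ∑ i, pderiv' (fun y => π y * γ y i) i x = 0)
    (Φ : EuclideanSpace ℝ (Fin d) → ℝ) (hΦ : ContDiff ℝ (⊤ : ℕ∞) Φ)
    (hΦc : HasCompactSupport Φ) :
    ∫ x, (Gamma2 π Φ x + GammaI π γ Φ x) * π x =
      ∫ x, genL π Φ x * (genL π Φ x + ∑ i, pderiv' Φ i x * γ x i) * π x := by
  have hπd : Differentiable ℝ π := hπ.differentiable (by simp)
  have hΦd : Differentiable ℝ Φ := hΦ.differentiable (by simp)
  have hlog : ContDiff ℝ (⊤ : ℕ∞) (fun y => Real.log (π y)) :=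
    hπ.log (fun x => (hπpos x).ne')
  have hγi : ∀ i : Fin d, ContDiff ℝ (⊤ : ℕ∞) (fun y => γ y i) := fun i =>
    contDiff_euclidean.mp hγ i
  set g : EuclideanSpace ℝ (Fin d) → ℝ := fun y => Gamma1 Φ Φ y with hgdef
  set h : EuclideanSpace ℝ (Fin d) → ℝ := fun y => genL π Φ y with hhdef
  have hgsm : ContDiff ℝ (⊤ : ℕ∞) g := by
    rw [hgdef]; unfold Gamma1
    exact ContDiff.sum fun j _ => (contDiff_pderiv'_s11 hΦ j).mul (contDiff_pderiv'_s11 hΦ j)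
  have hhsm : ContDiff ℝ (⊤ : ℕ∞) h := by
    rw [hhdef]; unfold genL Gamma1 lap pderiv2
    exact ContDiff.add
      (ContDiff.sum fun j _ => (contDiff_pderiv'_s11 hlog j).mul (contDiff_pderiv'_s11 hΦ j))
      (ContDiff.sum fun j _ => contDiff_pderiv'_s11 (contDiff_pderiv'_s11 hΦ j) j)
  have hg0 : ∀ x, x ∉ tsupport Φ → g x = 0 := by
    intro x hx
    rw [hgdef]; unfold Gamma1
    simp only []
    exact Finset.sum_eq_zero fun j _ => by rw [pderiv'_eq_zero_of_nmem hx, zero_mul]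
  have hh0 : ∀ x, x ∉ tsupport Φ → h x = 0 := by
    intro x hx
    have hx1 : ∀ j : Fin d, pderiv' Φ j x = 0 := fun j => pderiv'_eq_zero_of_nmem hx
    have hx2 : ∀ j : Fin d, pderiv' (fun y => pderiv' Φ j y) j x = 0 := fun j =>
      pderiv'_eq_zero_of_nmem fun hmem => hx (tsupport_pderiv'_subset Φ j hmem)
    rw [hhdef]; unfold genL Gamma1 lap pderiv2
    simp only []
    rw [Finset.sum_eq_zero fun j _ => by rw [hx1 j, mul_zero],
      Finset.sum_eq_zero fun (j : Fin d) _ => hx2 j, add_zero]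
  have hgc : HasCompactSupport g :=
    hcs_of_support_subset hΦc (isClosed_tsupport Φ) fun x hx => by
      by_contra hmem
      exact hx (hg0 x hmem)
  have hhc : HasCompactSupport h :=
    hcs_of_support_subset hΦc (isClosed_tsupport Φ) fun x hx => by
      by_contra hmem
      exact hx (hh0 x hmem)
  set V : Fin d → EuclideanSpace ℝ (Fin d) → ℝ := fun i y =>
    (1/2 : ℝ) * (π y * pderiv' (fun z => Gamma1 Φ Φ z) i y)
      - (1/2 : ℝ) * (Gamma1 Φ Φ y * (π y * γ y i))
      - genL π Φ y * (pderiv' Φ i y * π y) with hVdef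
  have hVsm : ∀ i, ContDiff ℝ (⊤ : ℕ∞) (V i) := by
    intro i
    exact ((contDiff_const.mul (hπ.mul (contDiff_pderiv'_s11 hgsm i))).sub
      (contDiff_const.mul (hgsm.mul (hπ.mul (hγi i))))).sub
      (hhsm.mul ((contDiff_pderiv'_s11 hΦ i).mul hπ))
  have hV0 : ∀ i x, x ∉ tsupport Φ → V i x = 0 := by
    intro i x hx
    have h1 : pderiv' (fun z => Gamma1 Φ Φ z) i x = 0 :=
      pderiv'_eq_zero_of_nmem fun hmem => hx (by
        exact closure_minimal (fun y hy => by
          by_contra hy'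
          exact hy (hg0 y hy')) (isClosed_tsupport Φ) hmem)
    have h2 : Gamma1 Φ Φ x = 0 := hg0 x hx
    have h3 : genL π Φ x = 0 := hh0 x hx
    rw [hVdef]
    simp only [h1, h2, h3, mul_zero, zero_mul, sub_zero, zero_sub, neg_zero, sub_self]
  have hVc : ∀ i, HasCompactSupport (V i) := fun i =>
    hcs_of_support_subset hΦc (isClosed_tsupport Φ) fun x hx => by
      by_contra hmem
      exact hx (hV0 i x hmem)
  have hkey : ∀ x, (Gamma2 π Φ x + GammaI π γ Φ x) * π x =
      genL π Φ x * (genL π Φ x + ∑ i, pderiv' Φ i x * γ x i) * π x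
        + ∑ i, pderiv' (V i) i x := by
    intro x
    have dπ : DifferentiableAt ℝ π x := hπd x
    have dγ : ∀ i : Fin d, DifferentiableAt ℝ (fun y => γ y i) x := fun i =>
      ((hγi i).differentiable (by simp)).differentiableAt
    have dg : DifferentiableAt ℝ (fun y => Gamma1 Φ Φ y) x :=
      (hgsm.differentiable (by simp)).differentiableAt
    have dh : DifferentiableAt ℝ (fun y => genL π Φ y) x :=
      (hhsm.differentiable (by simp)).differentiableAt
    have dB : ∀ i : Fin d, DifferentiableAt ℝ (fun y => pderiv' (fun z => Gamma1 Φ Φ z) i y) x :=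
      fun i => ((contDiff_pderiv'_s11 hgsm i).differentiable (by simp)).differentiableAt
    have dDΦ : ∀ i : Fin d, DifferentiableAt ℝ (fun y => pderiv' Φ i y) x := fun i =>
      ((contDiff_pderiv'_s11 hΦ i).differentiable (by simp)).differentiableAt
    have hLπ : ∀ i : Fin d, pderiv' π i x
        = pderiv' (fun y => Real.log (π y)) i x * π x := by
      intro i
      rw [pd_log hπd hπpos x i]
      exact (div_mul_cancel₀ _ (hπpos x).ne').symm
    have hDV : ∀ i : Fin d, pderiv' (V i) i x =
        (1/2 : ℝ) * (pderiv' π i x * pderiv' (fun z => Gamma1 Φ Φ z) i x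
            + π x * pderiv' (fun y => pderiv' (fun z => Gamma1 Φ Φ z) i y) i x)
          - (1/2 : ℝ) * (pderiv' (fun z => Gamma1 Φ Φ z) i x * (π x * γ x i)
            + Gamma1 Φ Φ x * pderiv' (fun y => π y * γ y i) i x)
          - (pderiv' (fun y => genL π Φ y) i x * (pderiv' Φ i x * π x)
            + genL π Φ x * (pderiv' (fun y => pderiv' Φ i y) i x * π x
              + pderiv' Φ i x * pderiv' π i x)) := by
      intro i
      rw [hVdef]
      simp only []
      rw [pd_sub (((dπ.fun_mul (dB i)).const_mul _).fun_sub ((dg.fun_mul (dπ.fun_mul (dγ i))).const_mul _))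
        (dh.fun_mul ((dDΦ i).fun_mul dπ)) i]
      rw [pd_sub ((dπ.fun_mul (dB i)).const_mul _) ((dg.fun_mul (dπ.fun_mul (dγ i))).const_mul _) i]
      rw [pd_const_mul (dπ.fun_mul (dB i)) _ i, pd_const_mul (dg.fun_mul (dπ.fun_mul (dγ i))) _ i]
      rw [pd_mul dπ (dB i) i, pd_mul dg (dπ.fun_mul (dγ i)) i, pd_mul dh ((dDΦ i).fun_mul dπ) i,
        pd_mul (dDΦ i) dπ i]
    have hexp : ∑ i, pderiv' (V i) i x =
        ((1/2 : ℝ) * π x) * (∑ i, pderiv' (fun y => Real.log (π y)) i x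
            * pderiv' (fun z => Gamma1 Φ Φ z) i x)
          + ((1/2 : ℝ) * π x) * (∑ i, pderiv' (fun y => pderiv' (fun z => Gamma1 Φ Φ z) i y) i x)
          - ((1/2 : ℝ) * π x) * (∑ i, γ x i * pderiv' (fun z => Gamma1 Φ Φ z) i x)
          - ((1/2 : ℝ) * Gamma1 Φ Φ x) * (∑ i, pderiv' (fun y => π y * γ y i) i x)
          - π x * (∑ i, pderiv' (fun y => genL π Φ y) i x * pderiv' Φ i x)
          - (genL π Φ x * π x) * (∑ i, pderiv' (fun y => pderiv' Φ i y) i x)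
          - (genL π Φ x * π x) * (∑ i, pderiv' (fun y => Real.log (π y)) i x * pderiv' Φ i x)
          := by
      have hterm : ∀ i : Fin d, pderiv' (V i) i x =
          ((1/2 : ℝ) * π x) * (pderiv' (fun y => Real.log (π y)) i x
              * pderiv' (fun z => Gamma1 Φ Φ z) i x)
            + ((1/2 : ℝ) * π x) * pderiv' (fun y => pderiv' (fun z => Gamma1 Φ Φ z) i y) i x
            - ((1/2 : ℝ) * π x) * (γ x i * pderiv' (fun z => Gamma1 Φ Φ z) i x)
            - ((1/2 : ℝ) * Gamma1 Φ Φ x) * pderiv' (fun y => π y * γ y i) i x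
            - π x * (pderiv' (fun y => genL π Φ y) i x * pderiv' Φ i x)
            - (genL π Φ x * π x) * pderiv' (fun y => pderiv' Φ i y) i x
            - (genL π Φ x * π x) * (pderiv' (fun y => Real.log (π y)) i x * pderiv' Φ i x) := by
        intro i
        rw [hDV i, hLπ i]
        ring
      rw [Finset.sum_congr rfl fun i _ => hterm i]
      simp only [Finset.sum_add_distrib, Finset.sum_sub_distrib, ← Finset.mul_sum]
    rw [hexp, hstat x]
    show ((1/2 : ℝ) * ((∑ i, pderiv' (fun y => Real.log (π y)) i x
              * pderiv' (fun z => Gamma1 Φ Φ z) i x)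
            + ∑ i, pderiv' (fun y => pderiv' (fun z => Gamma1 Φ Φ z) i y) i x)
          - (∑ i, pderiv' (fun y => genL π Φ y) i x * pderiv' Φ i x)
        + (-(1/2 : ℝ) * (∑ i, γ x i * pderiv' (fun z => Gamma1 Φ Φ z) i x)
          + ((∑ i, pderiv' (fun y => Real.log (π y)) i x * pderiv' Φ i x)
              + ∑ i, pderiv' (fun y => pderiv' Φ i y) i x)
            * (∑ i, pderiv' Φ i x * γ x i))) * π x
      = ((∑ i, pderiv' (fun y => Real.log (π y)) i x * pderiv' Φ i x)
              + ∑ i, pderiv' (fun y => pderiv' Φ i y) i x)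
          * (((∑ i, pderiv' (fun y => Real.log (π y)) i x * pderiv' Φ i x)
              + ∑ i, pderiv' (fun y => pderiv' Φ i y) i x)
            + ∑ i, pderiv' Φ i x * γ x i) * π x + _
    rw [show genL π Φ x = (∑ i, pderiv' (fun y => Real.log (π y)) i x * pderiv' Φ i x)
        + ∑ i, pderiv' (fun y => pderiv' Φ i y) i x from rfl]
    ring
  have IR : Integrable (fun x => genL π Φ x * (genL π Φ x + ∑ i, pderiv' Φ i x * γ x i) * π x) := by
    apply Continuous.integrable_of_hasCompactSupport
    · exact (hhsm.continuous.mul (hhsm.continuous.add (continuous_finset_sum _ fun i _ =>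
        ((contDiff_pderiv'_s11 hΦ i).continuous.mul (hγi i).continuous)))).mul hπ.continuous
    · exact hcs_of_support_subset hΦc (isClosed_tsupport Φ) fun x hx => by
        by_contra hmem
        apply hx
        show genL π Φ x * _ * π x = 0
        rw [show genL π Φ x = h x from rfl, hh0 x hmem, zero_mul, zero_mul]
  have IV : ∀ i : Fin d, Integrable (fun x => pderiv' (V i) i x) := by
    intro i
    apply Continuous.integrable_of_hasCompactSupport (contDiff_pderiv'_s11 (hVsm i) i).continuous
    exact hcs_of_support_subset hΦc (isClosed_tsupport Φ) fun x hx => by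
      by_contra hmem
      exact hx (pderiv'_eq_zero_of_nmem (fun hmem2 => hmem (closure_minimal (fun y hy => by
        by_contra hy'
        exact hy (hV0 i y hy')) (isClosed_tsupport Φ) hmem2)) : pderiv' (V i) i x = 0)
  calc ∫ x, (Gamma2 π Φ x + GammaI π γ Φ x) * π x
      = ∫ x, (genL π Φ x * (genL π Φ x + ∑ i, pderiv' Φ i x * γ x i) * π x
          + ∑ i, pderiv' (V i) i x) := by simp_rw [hkey]
    _ = (∫ x, genL π Φ x * (genL π Φ x + ∑ i, pderiv' Φ i x * γ x i) * π x)
          + ∫ x, ∑ i, pderiv' (V i) i x :=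
        integral_add IR (integrable_finset_sum _ fun i _ => IV i)
    _ = ∫ x, genL π Φ x * (genL π Φ x + ∑ i, pderiv' Φ i x * γ x i) * π x := by
        rw [integral_finset_sum _ fun i _ => IV i,
          Finset.sum_eq_zero fun i _ => intD (hVsm i) (hVc i) i, add_zero]

end
end
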